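/- For every n ≥ 1, the Eulerian polynomial A_n(t) = Σ_{π ∈ S_n} t^{des(π)} satisfies A_n(t) = Σ_{k=0}^{⌊(n−1)/2⌋} γ_{n,k} t^k (1+t)^{n−1−2k}, where γ_{n,k} is the number of permutations π ∈ S_n with no double descents (dd(π) = 0) and des(π) = k. -/

import Mathlib

open Classical Polynomial

/-- Number of descents of a permutation of `Fin n`. -/
noncomputable def desNum {n : ℕ} (π : Equiv.Perm (Fin n)) : ℕ :=
  (Finset.univ.filter (fun i : Fin n =>
    ∃ h : i.1 + 1 < n, π ⟨i.1 + 1, h⟩ < π i)).card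

/-- Number of double descents, with boundary convention `π(0) = π(n+1) = ∞`. -/
noncomputable def ddNum {n : ℕ} (π : Equiv.Perm (Fin n)) : ℕ :=
  (Finset.univ.filter (fun i : Fin n =>
    (i.1 = 0 ∨ ∃ h : i.1 - 1 < n, π i < π ⟨i.1 - 1, h⟩) ∧
    ∃ h : i.1 + 1 < n, π ⟨i.1 + 1, h⟩ < π i)).card


namespace Gamma

variable {α : Type*} [LinearOrder α]

/-- `pbig p x` : the previous letter (`none` = +∞) is bigger than `x`. -/
def pbig (p : Option α) (x : α) : Bool := p.all fun q => decide (x < q)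

/-- `nsmall x t` : the next letter (head of `t`; end = +∞) is smaller than `x`. -/
def nsmall (x : α) : List α → Bool
  | [] => false
  | y :: _ => decide (y < x)

/-- number of descents -/
def desL : List α → ℕ
  | [] => 0
  | x :: t => (if nsmall x t then 1 else 0) + desL t

/-- list of double-descent letters, given previous letter `p` -/
def ddL (p : Option α) : List α → List α
  | [] => []
  | x :: t => (if pbig p x && nsmall x t then [x] else []) ++ ddL (some x) t

/-- list of double-ascent letters -/
def daL (p : Option α) : List α → List α
  | [] => []
  | x :: t => (if !pbig p x && !nsmall x t then [x] else []) ++ daL (some x) t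

/-- number of valleys -/
def vlC (p : Option α) : List α → ℕ
  | [] => 0
  | x :: t => (if pbig p x && !nsmall x t then 1 else 0) + vlC (some x) t

/-- number of peaks -/
def pkC (p : Option α) : List α → ℕ
  | [] => 0
  | x :: t => (if !pbig p x && nsmall x t then 1 else 0) + pkC (some x) t

@[simp] lemma pbig_none (x : α) : pbig (none : Option α) x = true := rfl
@[simp] lemma pbig_some (q x : α) : pbig (some q) x = decide (x < q) := rfl
@[simp] lemma nsmall_nil (x : α) : nsmall x ([] : List α) = false := rfl
@[simp] lemma nsmall_cons (x y : α) (t : List α) : nsmall x (y :: t) = decide (y < x) := rfl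

lemma nsmall_append_left (x : α) (a b : List α) (ha : a ≠ []) :
    nsmall x (a ++ b) = nsmall x a := by
  cases a with
  | nil => simp at ha
  | cons y t => rfl

@[simp] lemma desL_nil : desL ([] : List α) = 0 := rfl
lemma desL_cons (x : α) (t : List α) :
    desL (x :: t) = (if nsmall x t then 1 else 0) + desL t := rfl
@[simp] lemma ddL_nil (p : Option α) : ddL p ([] : List α) = [] := rfl
lemma ddL_cons (p : Option α) (x : α) (t : List α) :
    ddL p (x :: t) = (if pbig p x && nsmall x t then [x] else []) ++ ddL (some x) t := rfl
@[simp] lemma daL_nil (p : Option α) : daL p ([] : List α) = [] := rfl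
lemma daL_cons (p : Option α) (x : α) (t : List α) :
    daL p (x :: t) = (if !pbig p x && !nsmall x t then [x] else []) ++ daL (some x) t := rfl
@[simp] lemma vlC_nil (p : Option α) : vlC p ([] : List α) = 0 := rfl
lemma vlC_cons (p : Option α) (x : α) (t : List α) :
    vlC p (x :: t) = (if pbig p x && !nsmall x t then 1 else 0) + vlC (some x) t := rfl
@[simp] lemma pkC_nil (p : Option α) : pkC p ([] : List α) = 0 := rfl
lemma pkC_cons (p : Option α) (x : α) (t : List α) :
    pkC p (x :: t) = (if !pbig p x && nsmall x t then 1 else 0) + pkC (some x) t := rfl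

lemma ddL_congr (p p' : Option α) (l : List α)
    (h : ∀ hd ∈ l.head?, pbig p hd = pbig p' hd) : ddL p l = ddL p' l := by
  cases l with
  | nil => rfl
  | cons x t => simp only [ddL_cons, h x (by simp)]

lemma daL_congr (p p' : Option α) (l : List α)
    (h : ∀ hd ∈ l.head?, pbig p hd = pbig p' hd) : daL p l = daL p' l := by
  cases l with
  | nil => rfl
  | cons x t => simp only [daL_cons, h x (by simp)]

lemma ddL_sublist (p : Option α) (l : List α) : List.Sublist (ddL p l) l := by
  induction l generalizing p with
  | nil => simp
  | cons x t ih =>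
    rw [ddL_cons]
    by_cases h : (pbig p x && nsmall x t) = true
    · rw [if_pos h]; exact List.Sublist.cons₂ x (ih (some x))
    · rw [if_neg h]; exact List.Sublist.cons x (ih (some x))

lemma daL_sublist (p : Option α) (l : List α) : List.Sublist (daL p l) l := by
  induction l generalizing p with
  | nil => simp
  | cons x t ih =>
    rw [daL_cons]
    by_cases h : (!pbig p x && !nsmall x t) = true
    · rw [if_pos h]; exact List.Sublist.cons₂ x (ih (some x))
    · rw [if_neg h]; exact List.Sublist.cons x (ih (some x))

lemma four_class (p : Option α) (l : List α) :
    vlC p l + pkC p l + (ddL p l).length + (daL p l).length = l.length := by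
  induction l generalizing p with
  | nil => simp
  | cons x t ih =>
    simp only [vlC_cons, pkC_cons, ddL_cons, daL_cons, List.length_append, List.length_cons]
    have := ih (some x)
    cases hb : pbig p x <;> cases hc : nsmall x t <;> simp <;> omega

lemma des_eq_pk_add_dd (p : Option α) (l : List α) :
    desL l = pkC p l + (ddL p l).length := by
  induction l generalizing p with
  | nil => simp
  | cons x t ih =>
    simp only [desL_cons, pkC_cons, ddL_cons, List.length_append]
    have := ih (some x)
    cases hb : pbig p x <;> cases hc : nsmall x t <;> simp <;> omega

lemma vl_eq_pk (p : Option α) (x : α) (t : List α) :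
    vlC p (x :: t) = pkC p (x :: t) + (if pbig p x then 1 else 0) := by
  induction t generalizing p x with
  | nil => cases hb : pbig p x <;> simp [vlC_cons, pkC_cons, hb]
  | cons y t ih =>
    have h1 : vlC p (x :: y :: t) =
        (if pbig p x && !nsmall x (y :: t) then 1 else 0) + vlC (some x) (y :: t) := rfl
    have h2 : pkC p (x :: y :: t) =
        (if !pbig p x && nsmall x (y :: t) then 1 else 0) + pkC (some x) (y :: t) := rfl
    rw [h1, h2, ih (some x) y]
    have : pbig (some x) y = nsmall x (y :: t) := by simp
    rw [this]
    cases hb : pbig p x <;> cases hc : nsmall x (y :: t) <;> simp <;> omega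

/-- For a nonempty word with no double descents, the number of double ascents
is `length - 1 - 2 * des`. -/
lemma da_card_of_no_dd (l : List α) (hne : l ≠ []) (hdd : ddL none l = []) :
    2 * desL l + 1 + (daL none l).length = l.length := by
  obtain ⟨x, t, rfl⟩ := List.exists_cons_of_ne_nil hne
  have h1 := four_class (none : Option α) (x :: t)
  have h2 := des_eq_pk_add_dd (none : Option α) (x :: t)
  have h3 := vl_eq_pk (none : Option α) x t
  rw [hdd] at h1 h2
  simp only [List.length_nil] at h1 h2
  have h3' : vlC none (x :: t) = pkC none (x :: t) + 1 := by
    rw [h3]; simp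
  omega


/-! ### Hop lemmas -/

section Hop

variable {x : α} {v : List α}

lemma nsmall_head_big (hv : ∀ y ∈ v.head?, x < y) {y : α} (hy : y ≤ x) :
    nsmall y v = false := by
  cases v with
  | nil => rfl
  | cons z t =>
    have hz := hv z (by simp)
    rw [nsmall_cons]
    exact decide_eq_false (not_lt.mpr (hy.trans hz.le))

lemma pbig_trans {p : Option α} (hp : pbig p x = true) {y : α} (hy : y < x) :
    pbig p y = true := by
  cases p with
  | none => rfl
  | some q => simp only [pbig_some, decide_eq_true_eq] at hp ⊢; exact hy.trans hp

lemma inner_des (hv : ∀ y ∈ v.head?, x < y) :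
    ∀ (u : List α), u ≠ [] → (∀ y ∈ u, y < x) →
      desL (u ++ v) = desL (u ++ x :: v) := by
  intro u
  induction u with
  | nil => intro h; exact absurd rfl h
  | cons y u' ih =>
    intro _ hu
    have hy : y < x := hu y (by simp)
    cases u' with
    | nil =>
      have h1 : nsmall y v = false := nsmall_head_big hv hy.le
      have h2 : nsmall x v = false := nsmall_head_big hv le_rfl
      have h3 : nsmall y (x :: v) = false := by
        rw [nsmall_cons]; exact decide_eq_false (not_lt.mpr hy.le)
      simp [desL_cons, h1, h2, h3]
    | cons z u'' =>
      have := ih (by simp) (fun w hw => hu w (by simp [hw]))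
      simp only [List.cons_append, desL_cons, nsmall_cons] at *
      rw [this]
      rfl

lemma inner_dd_aux (hv : ∀ y ∈ v.head?, x < y) :
    ∀ (u' : List α) (y : α), y < x → (∀ z ∈ u', z < x) →
      ∀ P Q : Option α, pbig P y = pbig Q y →
      ddL P ((y :: u') ++ v) = ddL Q ((y :: u') ++ x :: v) := by
  intro u'
  induction u' with
  | nil =>
    intro y hy _ P Q hPQ
    have h1 : nsmall y v = false := nsmall_head_big hv hy.le
    have h3 : nsmall y (x :: v) = false := by
      rw [nsmall_cons]; exact decide_eq_false (not_lt.mpr hy.le)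
    have h2 : nsmall x v = false := nsmall_head_big hv le_rfl
    have h5 : pbig (some y) x = false := by
      rw [pbig_some]; exact decide_eq_false (not_lt.mpr hy.le)
    have h6 : ddL (some y) v = ddL (some x) v := by
      apply ddL_congr
      intro hd hhd
      have : x < hd := hv hd hhd
      have hyhd : y < hd := hy.trans this
      simp [not_lt.mpr this.le, not_lt.mpr hyhd.le]
    simp [ddL_cons, h1, h3, h2, h5, hPQ, h6]
  | cons z u'' ih =>
    intro y hy hu P Q hPQ
    have hz : z < x := hu z (by simp)
    have heq := ih z hz (fun w hw => hu w (by simp [hw])) (some y) (some y) rfl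
    simp only [List.cons_append, ddL_cons, nsmall_cons] at *
    rw [hPQ, heq]
    rfl

lemma inner_dd (hv : ∀ y ∈ v.head?, x < y) (u : List α) (hune : u ≠ [])
    (hu : ∀ y ∈ u, y < x) (P : Option α) (hP : pbig P x = true) :
    ddL P (x :: (u ++ v)) = x :: ddL P (u ++ x :: v) := by
  obtain ⟨y, u', rfl⟩ := List.exists_cons_of_ne_nil hune
  have hy : y < x := hu y (by simp)
  have h1 : nsmall x ((y :: u') ++ v) = true := by
    rw [List.cons_append, nsmall_cons]; exact decide_eq_true hy
  have h2 := inner_dd_aux hv u' y hy (fun w hw => hu w (by simp [hw]))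
    (some x) P (by rw [pbig_some, pbig_trans hP hy]; exact (decide_eq_true hy))
  rw [ddL_cons, h1, hP]
  simp only [List.cons_append] at h2
  simp [h2]

lemma inner_da_aux (hv : ∀ y ∈ v.head?, x < y) :
    ∀ (u' : List α) (y : α), y < x → (∀ z ∈ u', z < x) →
      ∀ P Q : Option α, pbig P y = pbig Q y →
      List.Perm (daL Q ((y :: u') ++ x :: v)) (x :: daL P ((y :: u') ++ v)) := by
  intro u'
  induction u' with
  | nil =>
    intro y hy _ P Q hPQ
    have h1 : nsmall y v = false := nsmall_head_big hv hy.le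
    have h3 : nsmall y (x :: v) = false := by
      rw [nsmall_cons]; exact decide_eq_false (not_lt.mpr hy.le)
    have h2 : nsmall x v = false := nsmall_head_big hv le_rfl
    have h5 : pbig (some y) x = false := by
      rw [pbig_some]; exact decide_eq_false (not_lt.mpr hy.le)
    have h6 : daL (some y) v = daL (some x) v := by
      apply daL_congr
      intro hd hhd
      have : x < hd := hv hd hhd
      have hyhd : y < hd := hy.trans this
      simp [not_lt.mpr this.le, not_lt.mpr hyhd.le]
    have hL : daL Q ((y :: []) ++ x :: v) =
        (if !pbig Q y then [y] else []) ++ x :: daL (some x) v := by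
      simp [daL_cons, h3, h5, h2, h6]
    have hR : daL P ((y :: []) ++ v) =
        (if !pbig Q y then [y] else []) ++ daL (some x) v := by
      simp [daL_cons, h1, hPQ, h6]
    rw [hL, hR]
    exact List.perm_middle
  | cons z u'' ih =>
    intro y hy hu P Q hPQ
    have hz : z < x := hu z (by simp)
    have hperm := ih z hz (fun w hw => hu w (by simp [hw])) (some y) (some y) rfl
    simp only [List.cons_append, daL_cons, nsmall_cons] at *
    rw [hPQ]
    exact (List.Perm.append_left _ hperm).trans List.perm_middle

lemma inner_da (hv : ∀ y ∈ v.head?, x < y) (u : List α) (hune : u ≠ [])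
    (hu : ∀ y ∈ u, y < x) (P : Option α) (hP : pbig P x = true) :
    List.Perm (daL P (u ++ x :: v)) (x :: daL P (x :: (u ++ v))) := by
  obtain ⟨y, u', rfl⟩ := List.exists_cons_of_ne_nil hune
  have hy : y < x := hu y (by simp)
  have hR : daL P (x :: ((y :: u') ++ v)) = daL (some x) ((y :: u') ++ v) := by
    rw [daL_cons, hP]; simp
  rw [hR]
  exact inner_da_aux hv u' y hy (fun w hw => hu w (by simp [hw])) (some x) P
    (by rw [pbig_some, pbig_trans hP hy]; exact (decide_eq_true hy))

variable {u : List α}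

lemma outer_des (hv : ∀ y ∈ v.head?, x < y) (hune : u ≠ []) (hu : ∀ y ∈ u, y < x) :
    ∀ (a : List α), (∀ z ∈ a.getLast?, x < z) →
      desL (a ++ x :: (u ++ v)) = desL (a ++ (u ++ x :: v)) + 1 := by
  intro a
  induction a with
  | nil =>
    intro _
    obtain ⟨y, u', rfl⟩ := List.exists_cons_of_ne_nil hune
    have hy : y < x := hu y (by simp)
    have h1 : nsmall x ((y :: u') ++ v) = true := by
      rw [List.cons_append, nsmall_cons]; exact decide_eq_true hy
    have h2 := inner_des hv (y :: u') (by simp) hu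
    simp only [List.nil_append, desL_cons, h1, if_true, h2]
    omega
  | cons c a' ih =>
    intro hlast
    have hns : nsmall c (a' ++ x :: (u ++ v)) = nsmall c (a' ++ (u ++ x :: v)) := by
      cases a' with
      | nil =>
        have hc : x < c := hlast c (by simp)
        obtain ⟨y, u', rfl⟩ := List.exists_cons_of_ne_nil hune
        have hy : y < x := hu y (by simp)
        simp only [List.nil_append, List.cons_append, nsmall_cons]
        rw [decide_eq_true hc, decide_eq_true (hy.trans hc)]
      | cons d a'' => rfl
    have ih' := ih (by
      intro z hz
      apply hlast
      cases a' with
      | nil => simp at hz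
      | cons d a'' => rw [List.getLast?_cons_cons]; exact hz)
    simp only [List.cons_append, desL_cons, hns, ih']
    omega

lemma outer_dd (hv : ∀ y ∈ v.head?, x < y) (hune : u ≠ []) (hu : ∀ y ∈ u, y < x) :
    ∀ (a : List α) (p : Option α), (a = [] → pbig p x = true) →
      (∀ z ∈ a.getLast?, x < z) →
      List.Perm (ddL p (a ++ x :: (u ++ v))) (x :: ddL p (a ++ (u ++ x :: v))) := by
  intro a
  induction a with
  | nil =>
    intro p hp _
    rw [List.nil_append, List.nil_append, inner_dd hv u hune hu p (hp rfl)]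
  | cons c a' ih =>
    intro p _ hlast
    have hns : nsmall c (a' ++ x :: (u ++ v)) = nsmall c (a' ++ (u ++ x :: v)) := by
      cases a' with
      | nil =>
        have hc : x < c := hlast c (by simp)
        obtain ⟨y, u', rfl⟩ := List.exists_cons_of_ne_nil hune
        have hy : y < x := hu y (by simp)
        simp only [List.nil_append, List.cons_append, nsmall_cons]
        rw [decide_eq_true hc, decide_eq_true (hy.trans hc)]
      | cons d a'' => rfl
    have ih' := ih (some c)
      (fun ha' => by
        subst ha'
        rw [pbig_some]
        exact decide_eq_true (hlast c (by simp)))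
      (fun z hz => hlast z (by
        cases a' with
        | nil => simp at hz
        | cons d a'' => rw [List.getLast?_cons_cons]; exact hz))
    simp only [List.cons_append, ddL_cons, hns]
    exact (List.Perm.append_left _ ih').trans List.perm_middle

lemma outer_da (hv : ∀ y ∈ v.head?, x < y) (hune : u ≠ []) (hu : ∀ y ∈ u, y < x) :
    ∀ (a : List α) (p : Option α), (a = [] → pbig p x = true) →
      (∀ z ∈ a.getLast?, x < z) →
      List.Perm (daL p (a ++ (u ++ x :: v))) (x :: daL p (a ++ x :: (u ++ v))) := by
  intro a
  induction a with
  | nil =>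
    intro p hp _
    rw [List.nil_append, List.nil_append]
    exact inner_da hv u hune hu p (hp rfl)
  | cons c a' ih =>
    intro p _ hlast
    have hns : nsmall c (a' ++ x :: (u ++ v)) = nsmall c (a' ++ (u ++ x :: v)) := by
      cases a' with
      | nil =>
        have hc : x < c := hlast c (by simp)
        obtain ⟨y, u', rfl⟩ := List.exists_cons_of_ne_nil hune
        have hy : y < x := hu y (by simp)
        simp only [List.nil_append, List.cons_append, nsmall_cons]
        rw [decide_eq_true hc, decide_eq_true (hy.trans hc)]
      | cons d a'' => rfl
    have ih' := ih (some c)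
      (fun ha' => by
        subst ha'
        rw [pbig_some]
        exact decide_eq_true (hlast c (by simp)))
      (fun z hz => hlast z (by
        cases a' with
        | nil => simp at hz
        | cons d a'' => rw [List.getLast?_cons_cons]; exact hz))
    simp only [List.cons_append, daL_cons, hns]
    exact (List.Perm.append_left _ ih').trans List.perm_middle


/-! ### Membership characterizations -/

lemma mem_ddL_iff {p : Option α} {w : List α} {x : α} :
    x ∈ ddL p w ↔ ∃ a y b, w = a ++ x :: y :: b ∧ y < x ∧
      (∀ z ∈ a.getLast?, x < z) ∧ (a = [] → pbig p x = true) := by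
  constructor
  · intro hx
    induction w generalizing p with
    | nil => simp [ddL_nil] at hx
    | cons c t ih =>
      rw [ddL_cons] at hx
      rcases List.mem_append.mp hx with h | h
      · by_cases hc : (pbig p c && nsmall c t) = true
        · rw [if_pos hc] at h
          simp only [List.mem_singleton] at h
          subst h
          obtain ⟨hb, hs⟩ := Bool.and_eq_true_iff.mp hc
          cases t with
          | nil => simp [nsmall_nil] at hs
          | cons y b =>
            rw [nsmall_cons, decide_eq_true_eq] at hs
            exact ⟨[], y, b, rfl, hs, by simp, fun _ => hb⟩
        · rw [if_neg hc] at h; simp at h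
      · obtain ⟨a', y, b, ht, hy, hlast, hnil⟩ := ih h
        refine ⟨c :: a', y, b, by rw [ht, List.cons_append], hy, ?_, by simp⟩
        intro z hz
        cases a' with
        | nil =>
          simp only [List.getLast?_singleton, Option.mem_some_iff] at hz
          subst hz
          have := hnil rfl
          rw [pbig_some, decide_eq_true_eq] at this
          exact this
        | cons d a'' =>
          rw [List.getLast?_cons_cons] at hz
          exact hlast z hz
  · rintro ⟨a, y, b, rfl, hy, hlast, hnil⟩
    induction a generalizing p with
    | nil =>
      rw [List.nil_append, ddL_cons, hnil rfl, nsmall_cons, decide_eq_true hy]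
      simp
    | cons c a' ih =>
      rw [List.cons_append, ddL_cons]
      refine List.mem_append.mpr (Or.inr (ih ?_ ?_))
      · intro z hz
        apply hlast
        cases a' with
        | nil => simp at hz
        | cons d a'' => rw [List.getLast?_cons_cons]; exact hz
      · intro ha'
        subst ha'
        have : x < c := hlast c (by simp)
        rw [pbig_some]
        exact decide_eq_true this

lemma mem_daL_iff {p : Option α} {w : List α} {x : α} :
    x ∈ daL p w ↔ ∃ a b, w = a ++ x :: b ∧ (∀ z ∈ b.head?, x ≤ z) ∧
      (∀ z ∈ a.getLast?, z ≤ x) ∧ (a = [] → pbig p x = false) := by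
  constructor
  · intro hx
    induction w generalizing p with
    | nil => simp [daL_nil] at hx
    | cons c t ih =>
      rw [daL_cons] at hx
      rcases List.mem_append.mp hx with h | h
      · by_cases hc : (!pbig p c && !nsmall c t) = true
        · rw [if_pos hc] at h
          simp only [List.mem_singleton] at h
          subst h
          obtain ⟨hb, hs⟩ := Bool.and_eq_true_iff.mp hc
          refine ⟨[], t, rfl, ?_, by simp, fun _ => by simpa using hb⟩
          intro z hz
          cases t with
          | nil => simp at hz
          | cons y b =>
            simp only [List.head?_cons, Option.mem_some_iff] at hz
            subst hz
            rw [Bool.not_eq_true'] at hs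
            rw [nsmall_cons, decide_eq_false_iff_not, not_lt] at hs
            exact hs
        · rw [if_neg hc] at h; simp at h
      · obtain ⟨a', b, ht, hhead, hlast, hnil⟩ := ih h
        refine ⟨c :: a', b, by rw [ht, List.cons_append], hhead, ?_, by simp⟩
        intro z hz
        cases a' with
        | nil =>
          simp only [List.getLast?_singleton, Option.mem_some_iff] at hz
          subst hz
          have := hnil rfl
          rw [pbig_some, decide_eq_false_iff_not, not_lt] at this
          exact this
        | cons d a'' =>
          rw [List.getLast?_cons_cons] at hz
          exact hlast z hz
  · rintro ⟨a, b, rfl, hhead, hlast, hnil⟩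
    induction a generalizing p with
    | nil =>
      rw [List.nil_append, daL_cons, hnil rfl]
      have hns : nsmall x b = false := by
        cases b with
        | nil => rfl
        | cons y t =>
          rw [nsmall_cons]
          exact decide_eq_false (not_lt.mpr (hhead y (by simp)))
      rw [hns]
      simp
    | cons c a' ih =>
      rw [List.cons_append, daL_cons]
      refine List.mem_append.mpr (Or.inr (ih ?_ ?_))
      · intro z hz
        apply hlast
        cases a' with
        | nil => simp at hz
        | cons d a'' => rw [List.getLast?_cons_cons]; exact hz
      · intro ha'
        subst ha'
        have : c ≤ x := hlast c (by simp)
        rw [pbig_some]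
        exact decide_eq_false (not_lt.mpr this)

/-! ### take/dropWhile helpers -/

lemma takeWhile_append_all {p : α → Bool} {u v : List α}
    (hu : ∀ y ∈ u, p y = true) (hv : ∀ y ∈ v.head?, p y = false) :
    (u ++ v).takeWhile p = u ∧ (u ++ v).dropWhile p = v := by
  induction u with
  | nil =>
    simp only [List.nil_append]
    cases v with
    | nil => simp
    | cons y t =>
      have := hv y (by simp)
      rw [List.takeWhile_cons, List.dropWhile_cons, this]
      simp
  | cons c u' ih =>
    have hc := hu c (by simp)
    obtain ⟨h1, h2⟩ := ih (fun y hy => hu y (by simp [hy])) 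
    rw [List.cons_append, List.takeWhile_cons, List.dropWhile_cons, hc]
    simp [h1, h2]

/-! ### The hop maps -/

def hopR (x : α) (w : List α) : List α :=
  let b := (w.dropWhile fun c => decide (c ≠ x)).tail
  (w.takeWhile fun c => decide (c ≠ x)) ++
    ((b.takeWhile fun c => decide (c < x)) ++ x :: (b.dropWhile fun c => decide (c < x)))

def hopL (x : α) (w : List α) : List α :=
  let a := w.takeWhile fun c => decide (c ≠ x)
  let b := (w.dropWhile fun c => decide (c ≠ x)).tail
  ((a.reverse.dropWhile fun c => decide (c < x)).reverse) ++
    x :: ((a.reverse.takeWhile fun c => decide (c < x)).reverse ++ b)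

lemma hopR_eq {x : α} {a u v : List α} (ha : x ∉ a) (hu : ∀ y ∈ u, y < x)
    (hv : ∀ y ∈ v.head?, ¬ y < x) :
    hopR x (a ++ x :: (u ++ v)) = a ++ (u ++ x :: v) := by
  have h0 := takeWhile_append_all (p := fun c => decide (c ≠ x)) (u := a) (v := x :: (u ++ v))
    (fun y hy => decide_eq_true (fun h => ha (h ▸ hy)))
    (by intro z hz; simp only [List.head?_cons, Option.mem_some_iff] at hz; subst hz; simp)
  have h1 := takeWhile_append_all (p := fun c => decide (c < x)) (u := u) (v := v)
    (fun y hy => decide_eq_true (hu y hy))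
    (fun y hy => decide_eq_false (hv y hy))
  rw [hopR]
  simp only [h0.1, h0.2, List.tail_cons, h1.1, h1.2]

lemma hopL_eq {x : α} {a u v : List α} (ha : x ∉ a) (hxu : x ∉ u)
    (hu : ∀ y ∈ u, y < x) (halast : ∀ z ∈ a.getLast?, ¬ z < x) :
    hopL x ((a ++ u) ++ x :: v) = a ++ x :: (u ++ v) := by
  have h0 := takeWhile_append_all (p := fun c => decide (c ≠ x)) (u := a ++ u) (v := x :: v)
    (by
      intro y hy
      rcases List.mem_append.mp hy with h | h
      · exact decide_eq_true (fun hh => ha (hh ▸ h))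
      · exact decide_eq_true (fun hh => hxu (hh ▸ h)))
    (by intro z hz; simp only [List.head?_cons, Option.mem_some_iff] at hz; subst hz; simp)
  have h1 := takeWhile_append_all (p := fun c => decide (c < x)) (u := u.reverse) (v := a.reverse)
    (fun y hy => decide_eq_true (hu y (List.mem_reverse.mp hy)))
    (by
      intro y hy
      rw [List.head?_reverse] at hy
      exact decide_eq_false (halast y hy))
  rw [hopL]
  simp only [h0.1, h0.2, List.tail_cons, List.reverse_append, h1.1, h1.2,
    List.reverse_reverse]

/-! ### Factorizations -/

lemma dd_factor {w : List α} {x : α} (hnd : w.Nodup) (hx : x ∈ ddL none w) :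
    ∃ a u v, w = a ++ x :: (u ++ v) ∧ u ≠ [] ∧ (∀ y ∈ u, y < x) ∧
      (∀ y ∈ v.head?, x < y) ∧ (∀ z ∈ a.getLast?, x < z) ∧
      hopR x w = a ++ (u ++ x :: v) := by
  obtain ⟨a, y, b, rfl, hy, hlast, -⟩ := mem_ddL_iff.mp hx
  have hxa : x ∉ a := by
    have := List.nodup_middle.mp hnd
    exact fun h => (List.nodup_cons.mp this).1 (List.mem_append.mpr (Or.inl h))
  have hxr : x ∉ y :: b := by
    have := List.nodup_middle.mp hnd
    exact fun h => (List.nodup_cons.mp this).1 (List.mem_append.mpr (Or.inr h))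
  set u := (y :: b).takeWhile fun c => decide (c < x) with hu_def
  set v := (y :: b).dropWhile fun c => decide (c < x) with hv_def
  have huv : u ++ v = y :: b := List.takeWhile_append_dropWhile
  have hune : u ≠ [] := by
    rw [hu_def, List.takeWhile_cons, decide_eq_true hy]; simp
  have hu : ∀ z ∈ u, z < x := by
    intro z hz
    have := List.mem_takeWhile_imp hz
    rwa [decide_eq_true_eq] at this
  have hv : ∀ z ∈ v.head?, x < z := by
    intro z hz
    have h2 := List.head?_dropWhile_not (fun c => decide (c < x)) (y :: b)
    rw [← hv_def] at h2
    have hzx : ¬ z < x := by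
      cases hvv : v.head? with
      | none => rw [hvv] at hz; simp at hz
      | some zz =>
        rw [hvv] at hz h2
        simp only [Option.mem_some_iff] at hz
        subst hz
        simpa using h2
    have hzw : z ∈ v := List.mem_of_mem_head? hz
    have hzne : z ≠ x := by
      intro h
      subst h
      exact hxr (huv ▸ List.mem_append.mpr (Or.inr hzw))
    exact lt_of_le_of_ne (not_lt.mp hzx) (Ne.symm hzne)
  refine ⟨a, u, v, by rw [huv], hune, hu, hv, hlast, ?_⟩
  rw [show a ++ x :: y :: b = a ++ x :: (u ++ v) by rw [huv]]
  exact hopR_eq hxa hu (fun z hz => not_lt.mpr (hv z hz).le)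

lemma da_factor {w : List α} {x : α} (hnd : w.Nodup) (hx : x ∈ daL none w) :
    ∃ a u v, w = a ++ (u ++ x :: v) ∧ u ≠ [] ∧ (∀ y ∈ u, y < x) ∧
      (∀ y ∈ v.head?, x < y) ∧ (∀ z ∈ a.getLast?, x < z) ∧
      hopL x w = a ++ x :: (u ++ v) := by
  obtain ⟨A, b, rfl, hhead, hlast, hnil⟩ := mem_daL_iff.mp hx
  have hAne : A ≠ [] := fun h => by simpa using hnil h
  have hxA : x ∉ A := by
    have := List.nodup_middle.mp hnd
    exact fun h => (List.nodup_cons.mp this).1 (List.mem_append.mpr (Or.inl h))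
  have hxb : x ∉ b := by
    have := List.nodup_middle.mp hnd
    exact fun h => (List.nodup_cons.mp this).1 (List.mem_append.mpr (Or.inr h))
  set ur := A.reverse.takeWhile fun c => decide (c < x) with hu_def
  set ar := A.reverse.dropWhile fun c => decide (c < x) with ha_def
  have hsplit : ur ++ ar = A.reverse := List.takeWhile_append_dropWhile
  have hA : A = ar.reverse ++ ur.reverse := by
    rw [← List.reverse_append, hsplit, List.reverse_reverse]
  have hu : ∀ z ∈ ur.reverse, z < x := by
    intro z hz
    have := List.mem_takeWhile_imp (List.mem_reverse.mp hz)
    rwa [decide_eq_true_eq] at this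
  have hune : ur ≠ [] := by
    have hgl : A.getLast? = some (A.getLast hAne) := List.getLast?_eq_getLast hAne
    have hzle : A.getLast hAne ≤ x := hlast _ (by rw [hgl]; rfl)
    have hzlt : A.getLast hAne < x :=
      lt_of_le_of_ne hzle (fun h => hxA (h ▸ List.getLast_mem hAne))
    have hhr : A.reverse.head? = some (A.getLast hAne) := by
      rw [List.head?_reverse, hgl]
    cases hAr : A.reverse with
    | nil => rw [hAr] at hhr; simp at hhr
    | cons c t =>
      rw [hAr] at hhr
      simp only [List.head?_cons, Option.some_inj] at hhr
      rw [hu_def, hAr, List.takeWhile_cons, hhr, decide_eq_true hzlt]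
      simp
  have harlast : ∀ z ∈ ar.reverse.getLast?, x < z := by
    intro z hz
    rw [List.getLast?_reverse] at hz
    have h2 := List.head?_dropWhile_not (fun c => decide (c < x)) A.reverse
    rw [← ha_def] at h2
    have hzx : ¬ z < x := by
      cases hvv : ar.head? with
      | none => rw [hvv] at hz; simp at hz
      | some zz =>
        rw [hvv] at hz h2
        simp only [Option.mem_some_iff] at hz
        subst hz
        simpa using h2
    have hzw : z ∈ A := by
      have : z ∈ ar := List.mem_of_mem_head? hz
      exact List.mem_reverse.mp ((hsplit ▸ List.mem_append.mpr (Or.inr this)) : z ∈ A.reverse)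
    exact lt_of_le_of_ne (not_lt.mp hzx) (fun h => hxA (h ▸ hzw))
  have hvhead : ∀ y ∈ b.head?, x < y := by
    intro z hz
    have hzw : z ∈ b := List.mem_of_mem_head? hz
    exact lt_of_le_of_ne (hhead z hz) (fun h => hxb (h ▸ hzw))
  have hurne : ur.reverse ≠ [] := fun h => hune (by simpa using h)
  refine ⟨ar.reverse, ur.reverse, b, by rw [← List.append_assoc, ← hA], hurne, hu, hvhead,
    harlast, ?_⟩
  have heq := hopL_eq (x := x) (a := ar.reverse) (u := ur.reverse) (v := b)
    (fun h => hxA (hA ▸ List.mem_append.mpr (Or.inl h)))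
    (fun h => hxA (hA ▸ List.mem_append.mpr (Or.inr h)))
    hu
    (fun z hz => lt_asymm (harlast z hz))
  rw [show A ++ x :: b = (ar.reverse ++ ur.reverse) ++ x :: b from by rw [← hA]]
  exact heq

end Hop

/-! ### Packaged hop lemmas -/

lemma hopR_all {w : List α} {x : α} (hnd : w.Nodup) (hx : x ∈ ddL none w) :
    List.Perm (hopR x w) w ∧ desL w = desL (hopR x w) + 1 ∧
    List.Perm (ddL none w) (x :: ddL none (hopR x w)) ∧
    List.Perm (daL none (hopR x w)) (x :: daL none w) ∧
    hopL x (hopR x w) = w := by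
  obtain ⟨a, u, v, hw, hune, hu, hv, hlast, hhop⟩ := dd_factor hnd hx
  have hperm : List.Perm (hopR x w) w := by
    rw [hhop, hw]
    exact List.Perm.append_left a (List.perm_middle.trans (List.Perm.refl _))
  refine ⟨hperm, ?_, ?_, ?_, ?_⟩
  · rw [hhop, hw]; exact outer_des hv hune hu a hlast
  · rw [hhop, hw]; exact outer_dd hv hune hu a none (fun _ => rfl) hlast
  · rw [hhop, hw]; exact outer_da hv hune hu a none (fun _ => rfl) hlast
  · rw [hhop, hw]
    have hnd' : (a ++ x :: (u ++ v)).Nodup := hw ▸ hnd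
    have hxa : x ∉ a := by
      have := List.nodup_middle.mp hnd'
      exact fun h => (List.nodup_cons.mp this).1 (List.mem_append.mpr (Or.inl h))
    have hxu : x ∉ u := by
      have := List.nodup_middle.mp hnd'
      exact fun h => (List.nodup_cons.mp this).1 (List.mem_append.mpr (Or.inr (List.mem_append.mpr (Or.inl h))))
    rw [show a ++ (u ++ x :: v) = (a ++ u) ++ x :: v from by rw [List.append_assoc]]
    exact hopL_eq hxa hxu hu (fun z hz => lt_asymm (hlast z hz))

lemma hopL_all {w : List α} {x : α} (hnd : w.Nodup) (hx : x ∈ daL none w) :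
    List.Perm (hopL x w) w ∧ desL (hopL x w) = desL w + 1 ∧
    List.Perm (ddL none (hopL x w)) (x :: ddL none w) ∧
    List.Perm (daL none w) (x :: daL none (hopL x w)) ∧
    hopR x (hopL x w) = w := by
  obtain ⟨a, u, v, hw, hune, hu, hv, hlast, hhop⟩ := da_factor hnd hx
  have hperm : List.Perm (hopL x w) w := by
    rw [hhop, hw]
    exact List.Perm.append_left a (List.perm_middle.symm.trans (List.Perm.refl _))
  have hperm' : List.Perm (x :: (u ++ v)) (u ++ x :: v) := List.perm_middle.symm
  refine ⟨hperm, ?_, ?_, ?_, ?_⟩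
  · rw [hhop, hw]
    have := outer_des hv hune hu a hlast
    omega
  · rw [hhop, hw]
    have := outer_dd hv hune hu a none (fun _ => rfl) hlast
    -- goal : ddL none (a ++ x :: (u++v)) ~ x :: ddL none (a ++ (u ++ x :: v))
    exact this
  · rw [hhop, hw]
    exact outer_da hv hune hu a none (fun _ => rfl) hlast
  · rw [hhop, hw]
    have hnd' : (a ++ (u ++ x :: v)).Nodup := hw ▸ hnd
    have hxa : x ∉ a := by
      rw [← List.append_assoc] at hnd'
      have := List.nodup_middle.mp hnd'
      exact fun h =>
        (List.nodup_cons.mp this).1 (List.mem_append.mpr (Or.inl (List.mem_append.mpr (Or.inl h))))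
    exact hopR_eq hxa hu (fun z hz => lt_asymm (hv z hz))

/-! ### Normalization -/

def ddF (w : List α) : Finset α := (ddL none w).toFinset
def daF (w : List α) : Finset α := (daL none w).toFinset

lemma ddF_def (w : List α) : ddF w = (ddL none w).toFinset := rfl
lemma daF_def (w : List α) : daF w = (daL none w).toFinset := rfl

lemma toFinset_nonempty {l : List α} (h : l ≠ []) : l.toFinset.Nonempty := by
  obtain ⟨c, t, rfl⟩ := List.exists_cons_of_ne_nil h
  exact ⟨c, by simp⟩

def nfAux : ℕ → List α → List α
  | 0, w => w
  | k+1, w =>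
    if h : ddL none w = [] then w
    else nfAux k (hopR ((ddF w).min' (toFinset_nonempty h)) w)

def nf (w : List α) : List α := nfAux (ddL none w).length w

def phiAux : ℕ → List α → Finset α → List α
  | 0, σ, _ => σ
  | k+1, σ, S =>
    if h : S.Nonempty then hopL (S.min' h) (phiAux k σ (S.erase (S.min' h))) else σ

def phi (σ : List α) (S : Finset α) : List α := phiAux S.card σ S

/-- All the facts about a single right hop, Finset version. -/
lemma hopR_step {w : List α} (hnd : w.Nodup) (h : ddL none w ≠ [])
    (x : α) (hx : x = (ddF w).min' (toFinset_nonempty h)) :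
    (hopR x w).Nodup ∧ List.Perm (hopR x w) w ∧
    (ddL none (hopR x w)).length + 1 = (ddL none w).length ∧
    ddF w = insert x (ddF (hopR x w)) ∧ x ∉ ddF (hopR x w) ∧
    daF (hopR x w) = insert x (daF w) ∧ x ∉ daF w ∧
    desL w = desL (hopR x w) + 1 ∧ hopL x (hopR x w) = w := by
  have hxmem : x ∈ ddL none w := by
    rw [← List.mem_toFinset, ← ddF_def, hx]
    exact Finset.min'_mem _ _
  obtain ⟨hperm, hdes, hdd, hda, hinv⟩ := hopR_all hnd hxmem
  have hnd' : (hopR x w).Nodup := hperm.nodup_iff.mpr hnd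
  have hddnd : (ddL none w).Nodup := (ddL_sublist none w).nodup hnd
  have hddnd' : (x :: ddL none (hopR x w)).Nodup := hdd.nodup_iff.mp hddnd
  have hdand' : (daL none (hopR x w)).Nodup := (daL_sublist none _).nodup hnd'
  have hdand2 : (x :: daL none w).Nodup := hda.nodup_iff.mp hdand'
  refine ⟨hnd', hperm, ?_, ?_, ?_, ?_, ?_, hdes, hinv⟩
  · have := hdd.length_eq; simp at this; omega
  · rw [ddF_def, ddF_def, (List.toFinset_eq_of_perm _ _ hdd)]; simp
  · rw [ddF_def, List.mem_toFinset]
    exact fun hc => (List.nodup_cons.mp hddnd').1 hc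
  · rw [daF_def, daF_def, (List.toFinset_eq_of_perm _ _ hda)]; simp
  · rw [daF_def, List.mem_toFinset]
    exact fun hc => (List.nodup_cons.mp hdand2).1 hc

lemma nfAux_spec : ∀ (k : ℕ) (w : List α), w.Nodup → (ddL none w).length ≤ k →
    (nfAux k w).Nodup ∧ List.Perm (nfAux k w) w ∧ ddL none (nfAux k w) = [] ∧
    desL (nfAux k w) + (ddL none w).length = desL w ∧
    daF (nfAux k w) = ddF w ∪ daF w ∧ Disjoint (ddF w) (daF w) := by
  intro k
  induction k with
  | zero =>
    intro w hnd hlen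
    have h0 : ddL none w = [] := List.length_eq_zero_iff.mp (Nat.le_zero.mp hlen)
    rw [nfAux]
    refine ⟨hnd, List.Perm.refl _, h0, by rw [h0]; simp, by rw [ddF_def, h0]; simp, ?_⟩
    rw [ddF_def, h0]; simp
  | succ k ih =>
    intro w hnd hlen
    by_cases h : ddL none w = []
    · rw [nfAux, dif_pos h]
      refine ⟨hnd, List.Perm.refl _, h, by rw [h]; simp, by rw [ddF_def, h]; simp, ?_⟩
      rw [ddF_def, h]; simp
    · rw [nfAux, dif_neg h]
      set x := (ddF w).min' (toFinset_nonempty h) with hx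
      obtain ⟨hnd', hperm, hlen', hddins, hxnot, hdains, hxnotda, hdes, hinv⟩ :=
        hopR_step hnd h x hx
      obtain ⟨ih1, ih2, ih3, ih4, ih5, ih6⟩ := ih (hopR x w) hnd' (by omega)
      refine ⟨ih1, ih2.trans hperm, ih3, by omega, ?_, ?_⟩
      · rw [ih5, hddins, hdains]
        ext z
        simp only [Finset.mem_union, Finset.mem_insert]
        tauto
      · rw [hddins]
        have hd2 : Disjoint (ddF (hopR x w)) (daF (hopR x w)) := ih6
        rw [hdains] at hd2
        rw [Finset.insert_eq, Finset.disjoint_union_left]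
        constructor
        · simpa using hxnotda
        · exact Finset.disjoint_insert_right.mp hd2 |>.2

lemma nf_spec {w : List α} (hnd : w.Nodup) :
    (nf w).Nodup ∧ List.Perm (nf w) w ∧ ddL none (nf w) = [] ∧
    desL (nf w) + (ddF w).card = desL w ∧
    daF (nf w) = ddF w ∪ daF w ∧ Disjoint (ddF w) (daF w) := by
  have := nfAux_spec (ddL none w).length w hnd le_rfl
  have hcard : (ddF w).card = (ddL none w).length :=
    List.toFinset_card_of_nodup ((ddL_sublist none w).nodup hnd)
  rw [nf]
  exact ⟨this.1, this.2.1, this.2.2.1, by rw [hcard]; exact this.2.2.2.1,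
    this.2.2.2.2.1, this.2.2.2.2.2⟩

lemma nf_step {w : List α} (hnd : w.Nodup) (h : ddL none w ≠ []) :
    nf w = nf (hopR ((ddF w).min' (toFinset_nonempty h)) w) := by
  set x := (ddF w).min' (toFinset_nonempty h) with hx
  obtain ⟨hnd', hperm, hlen', hddins, hxnot, hdains, hxnotda, hdes, hinv⟩ :=
    hopR_step hnd h x hx
  rw [nf, nf, ← hlen', nfAux, dif_neg h]

lemma phi_unfold (σ : List α) (S : Finset α) (h : S.Nonempty) :
    phi σ S = hopL (S.min' h) (phi σ (S.erase (S.min' h))) := by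
  have hcard : (S.erase (S.min' h)).card + 1 = S.card :=
    Finset.card_erase_add_one (Finset.min'_mem S h)
  rw [phi, phi, ← hcard, phiAux, dif_pos h]

lemma phi_spec : ∀ (k : ℕ) (σ : List α) (S : Finset α), σ.Nodup → ddL none σ = [] →
    S ⊆ daF σ → S.card ≤ k →
    (phi σ S).Nodup ∧ List.Perm (phi σ S) σ ∧ ddF (phi σ S) = S ∧
    daF (phi σ S) = daF σ \ S ∧ desL (phi σ S) = desL σ + S.card ∧
    nf (phi σ S) = σ := by
  intro k
  induction k with
  | zero =>
    intro σ S hnd hdd hsub hcard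
    have hS : S = ∅ := Finset.card_eq_zero.mp (Nat.le_zero.mp hcard)
    subst hS
    rw [phi]
    simp only [Finset.card_empty]
    rw [phiAux]
    refine ⟨hnd, List.Perm.refl _, by rw [ddF_def, hdd]; simp, by simp, by simp, ?_⟩
    rw [nf, hdd]
    simp [nfAux]
  | succ k ih =>
    intro σ S hnd hdd hsub hcard
    rcases S.eq_empty_or_nonempty with rfl | hS
    · rw [phi]
      simp only [Finset.card_empty]
      rw [phiAux]
      refine ⟨hnd, List.Perm.refl _, by rw [ddF_def, hdd]; simp, by simp, by simp, ?_⟩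
      rw [nf, hdd]
      simp [nfAux]
    · set x := S.min' hS with hx
      set S' := S.erase x with hS'
      have hxS : x ∈ S := Finset.min'_mem S hS
      have hsub' : S' ⊆ daF σ := (Finset.erase_subset _ _).trans hsub
      have hcard' : S'.card ≤ k := by
        have h9 := Finset.card_erase_add_one hxS
        rw [← hS'] at h9
        omega
      obtain ⟨ih1, ih2, ih3, ih4, ih5, ih6⟩ := ih σ S' hnd hdd hsub' hcard'
      set w' := phi σ S' with hw'
      have hxda : x ∈ daL none w' := by
        have : x ∈ daF w' := by
          rw [ih4, Finset.mem_sdiff]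
          exact ⟨hsub hxS, by simp [hS']⟩
        rwa [daF_def, List.mem_toFinset] at this
      obtain ⟨hperm, hdes, hdd', hda', hinv⟩ := hopL_all ih1 hxda
      have hnd2 : (hopL x w').Nodup := hperm.nodup_iff.mpr ih1
      have hrw : phi σ S = hopL x w' := phi_unfold σ S hS
      have hddnd' : (ddL none (hopL x w')).Nodup := (ddL_sublist none _).nodup hnd2
      have hddw' : ddF (hopL x w') = insert x S' := by
        rw [ddF_def, (List.toFinset_eq_of_perm _ _ hdd')]
        simp only [List.toFinset_cons]
        rw [← ddF, ih3]
      have hddS : ddF (hopL x w') = S := by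
        rw [hddw', hS', Finset.insert_erase hxS]
      have hdanew : daF (hopL x w') = daF σ \ S := by
        have h1 : daF w' = insert x (daF (hopL x w')) := by
          rw [daF_def, daF_def, (List.toFinset_eq_of_perm _ _ hda')]; simp
        have hxnot : x ∉ daF (hopL x w') := by
          have := hda'.nodup_iff.mp ((daL_sublist none w').nodup ih1)
          rw [daF_def, List.mem_toFinset]
          exact (List.nodup_cons.mp this).1
        have h2 : daF (hopL x w') = (daF w').erase x := by
          rw [h1, Finset.erase_insert hxnot]
        have hSins : S = insert x S' := by rw [hS', Finset.insert_erase hxS]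
        rw [h2, ih4, hSins]
        ext z
        simp only [Finset.mem_erase, Finset.mem_sdiff, Finset.mem_insert]
        tauto
      refine ⟨by rw [hrw]; exact hnd2, by rw [hrw]; exact hperm.trans ih2, by rw [hrw]; exact hddS,
        by rw [hrw]; exact hdanew, ?_, ?_⟩
      · rw [hrw, hdes, ih5]
        have := Finset.card_erase_add_one hxS
        rw [← hS'] at this
        omega
      · rw [hrw]
        have hne : ddL none (hopL x w') ≠ [] := by
          intro hc
          rw [ddF_def, hc] at hddS
          simp at hddS
          exact Finset.notMem_empty x (hddS ▸ hxS)
        have hminx : (ddF (hopL x w')).min' (toFinset_nonempty hne) = x := by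
          apply le_antisymm
          · exact Finset.min'_le _ x (by rw [hddS]; exact hxS)
          · apply Finset.le_min'
            intro y hy
            rw [hddS] at hy
            rw [hx]
            exact Finset.min'_le S y hy
        rw [nf_step hnd2 hne, hminx, hinv, ih6]




lemma phi_nf : ∀ (n : ℕ) (w : List α), (ddL none w).length ≤ n → w.Nodup →
    phi (nf w) (ddF w) = w := by
  intro n
  induction n with
  | zero =>
    intro w hlen hnd
    have h : ddL none w = [] := List.length_eq_zero_iff.mp (Nat.le_zero.mp hlen)
    have h1 : nf w = w := by rw [nf, h]; simp [nfAux]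
    have h2 : ddF w = ∅ := by rw [ddF_def, h]; simp
    rw [h1, h2, phi]
    simp [phiAux]
  | succ k ih =>
    intro w hlen hnd
    by_cases h : ddL none w = []
    · have h1 : nf w = w := by rw [nf, h]; simp [nfAux]
      have h2 : ddF w = ∅ := by rw [ddF_def, h]; simp
      rw [h1, h2, phi]
      simp [phiAux]
    · set x := (ddF w).min' (toFinset_nonempty h) with hx
      obtain ⟨hnd', hperm, hlen', hddins, hxnot, hdains, hxnotda, hdes, hinv⟩ :=
        hopR_step hnd h x hx
      have hSne : (ddF w).Nonempty := toFinset_nonempty h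
      have hmin : (ddF w).min' hSne = x := by rw [hx]
      have herase : (ddF w).erase x = ddF (hopR x w) := by
        rw [hddins, Finset.erase_insert hxnot]
      have hstep : nf w = nf (hopR x w) := nf_step hnd h
      rw [phi_unfold (nf w) (ddF w) hSne, hmin, herase, hstep]
      have hlen2 : (ddL none (hopR x w)).length ≤ k := by omega
      rw [ih (hopR x w) hlen2 hnd', hinv]


lemma daF_card {w : List α} (hnd : w.Nodup) : (daF w).card = (daL none w).length :=
  List.toFinset_card_of_nodup ((daL_sublist none w).nodup hnd)

lemma ddF_subset_daF_nf {w : List α} (hnd : w.Nodup) : ddF w ⊆ daF (nf w) := by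
  have h := (nf_spec hnd).2.2.2.2.1
  rw [h]
  exact Finset.subset_union_left

/-! ### Positional descriptions -/

lemma desL_eq_sum : ∀ (w : List α) (n : ℕ) (hn : w.length = n), desL w =
    ∑ i ∈ Finset.range n, if (∃ h : i + 1 < n,
      w[i+1]'(Nat.lt_of_lt_of_eq h hn.symm) <
      w[i]'(Nat.lt_of_succ_lt (Nat.lt_of_lt_of_eq h hn.symm))) then 1 else 0 := by
  classical
  intro w
  induction w with
  | nil =>
    intro n hn
    simp only [List.length_nil] at hn
    subst hn
    simp
  | cons c t ih =>
    intro n hn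
    rw [List.length_cons] at hn
    subst hn
    rw [Finset.sum_range_succ']
    have hshift : ∀ i, (if (∃ h : (i+1) + 1 < t.length + 1,
        (c :: t)[i+1+1]'(Nat.lt_of_lt_of_eq h rfl) <
        (c :: t)[i+1]'(Nat.lt_of_succ_lt (Nat.lt_of_lt_of_eq h rfl))) then 1 else 0) =
        (if (∃ h : i + 1 < t.length,
          t[i+1]'(Nat.lt_of_lt_of_eq h rfl) <
          t[i]'(Nat.lt_of_succ_lt (Nat.lt_of_lt_of_eq h rfl))) then 1 else 0) := by
      intro i
      apply if_congr _ rfl rfl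
      constructor
      · rintro ⟨h, hlt⟩
        exact ⟨by omega, by simpa using hlt⟩
      · rintro ⟨h, hlt⟩
        exact ⟨by omega, by simpa using hlt⟩
    have hzero : (if (∃ h : 0 + 1 < t.length + 1,
        (c :: t)[0+1]'(Nat.lt_of_lt_of_eq h rfl) <
        (c :: t)[0]'(Nat.lt_of_succ_lt (Nat.lt_of_lt_of_eq h rfl))) then 1 else 0) =
        (if nsmall c t then 1 else 0) := by
      cases t with
      | nil => simp [nsmall_nil]
      | cons y t' =>
        simp only [nsmall_cons]
        apply if_congr _ rfl rfl
        constructor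
        · rintro ⟨h, hlt⟩
          simpa using hlt
        · intro hlt
          exact ⟨by simp, by simpa using of_decide_eq_true hlt⟩
    calc desL (c :: t) = (if nsmall c t then 1 else 0) + desL t := desL_cons c t
      _ = _ := by
          rw [ih t.length rfl, Finset.sum_congr rfl (fun i _ => hshift i), hzero]
          omega

lemma ddL_length_eq_sum : ∀ (w : List α) (p : Option α) (n : ℕ) (hn : w.length = n),
    (ddL p w).length =
    ∑ i ∈ Finset.range n,
      if (∃ h : i + 1 < n,
          w[i+1]'(Nat.lt_of_lt_of_eq h hn.symm) <
            w[i]'(Nat.lt_of_succ_lt (Nat.lt_of_lt_of_eq h hn.symm)) ∧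
          (i = 0 → pbig p (w[0]'(Nat.lt_of_le_of_lt (Nat.zero_le i)
            (Nat.lt_of_succ_lt (Nat.lt_of_lt_of_eq h hn.symm)))) = true) ∧
          (i ≠ 0 → w[i]'(Nat.lt_of_succ_lt (Nat.lt_of_lt_of_eq h hn.symm)) <
            w[i-1]'(Nat.lt_of_le_of_lt (Nat.sub_le i 1)
              (Nat.lt_of_succ_lt (Nat.lt_of_lt_of_eq h hn.symm)))))
        then 1 else 0 := by
  classical
  intro w
  induction w with
  | nil =>
    intro p n hn
    simp only [List.length_nil] at hn
    subst hn
    simp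
  | cons c t ih =>
    intro p n hn
    rw [List.length_cons] at hn
    subst hn
    rw [Finset.sum_range_succ']
    have hshift : ∀ i, (if (∃ h : (i+1) + 1 < t.length + 1,
        (c :: t)[i+1+1]'(Nat.lt_of_lt_of_eq h rfl) <
          (c :: t)[i+1]'(Nat.lt_of_succ_lt (Nat.lt_of_lt_of_eq h rfl)) ∧
        (i + 1 = 0 → pbig p ((c :: t)[0]'(Nat.lt_of_le_of_lt (Nat.zero_le (i+1))
          (Nat.lt_of_succ_lt (Nat.lt_of_lt_of_eq h rfl)))) = true) ∧
        (i + 1 ≠ 0 → (c :: t)[i+1]'(Nat.lt_of_succ_lt (Nat.lt_of_lt_of_eq h rfl)) <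
          (c :: t)[i+1-1]'(Nat.lt_of_le_of_lt (Nat.sub_le (i+1) 1)
            (Nat.lt_of_succ_lt (Nat.lt_of_lt_of_eq h rfl)))))
        then 1 else 0) =
        (if (∃ h : i + 1 < t.length,
          t[i+1]'(Nat.lt_of_lt_of_eq h rfl) <
            t[i]'(Nat.lt_of_succ_lt (Nat.lt_of_lt_of_eq h rfl)) ∧
          (i = 0 → pbig (some c) (t[0]'(Nat.lt_of_le_of_lt (Nat.zero_le i)
            (Nat.lt_of_succ_lt (Nat.lt_of_lt_of_eq h rfl)))) = true) ∧
          (i ≠ 0 → t[i]'(Nat.lt_of_succ_lt (Nat.lt_of_lt_of_eq h rfl)) <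
            t[i-1]'(Nat.lt_of_le_of_lt (Nat.sub_le i 1)
              (Nat.lt_of_succ_lt (Nat.lt_of_lt_of_eq h rfl)))))
        then 1 else 0) := by
      intro i
      apply if_congr _ rfl rfl
      constructor
      · rintro ⟨h, hlt, -, hprev⟩
        refine ⟨by omega, by simpa using hlt, ?_, ?_⟩
        · intro hi
          subst hi
          have h2 := hprev (by omega)
          simp only [List.getElem_cons_succ, List.getElem_cons_zero] at h2
          rw [pbig_some]
          exact decide_eq_true (by simpa using h2)
        · intro hi
          obtain ⟨j, rfl⟩ := Nat.exists_eq_succ_of_ne_zero hi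
          have h2 := hprev (by omega)
          simpa using h2
      · rintro ⟨h, hlt, hzero, hprev⟩
        refine ⟨by omega, by simpa using hlt, by omega, ?_⟩
        intro _
        by_cases hi : i = 0
        · subst hi
          have h2 := hzero rfl
          rw [pbig_some, decide_eq_true_eq] at h2
          simpa using h2
        · obtain ⟨j, rfl⟩ := Nat.exists_eq_succ_of_ne_zero hi
          have h2 := hprev hi
          simpa using h2
    have hzero : (if (∃ h : 0 + 1 < t.length + 1,
        (c :: t)[0+1]'(Nat.lt_of_lt_of_eq h rfl) <
          (c :: t)[0]'(Nat.lt_of_succ_lt (Nat.lt_of_lt_of_eq h rfl)) ∧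
        (0 = 0 → pbig p ((c :: t)[0]'(Nat.lt_of_le_of_lt (Nat.zero_le 0)
          (Nat.lt_of_succ_lt (Nat.lt_of_lt_of_eq h rfl)))) = true) ∧
        ((0:ℕ) ≠ 0 → (c :: t)[0]'(Nat.lt_of_succ_lt (Nat.lt_of_lt_of_eq h rfl)) <
          (c :: t)[0-1]'(Nat.lt_of_le_of_lt (Nat.sub_le 0 1)
            (Nat.lt_of_succ_lt (Nat.lt_of_lt_of_eq h rfl)))))
        then 1 else 0) =
        (if (pbig p c && nsmall c t) = true then 1 else 0) := by
      cases t with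
      | nil => simp [nsmall_nil]
      | cons y t' =>
        simp only [nsmall_cons]
        apply if_congr _ rfl rfl
        constructor
        · rintro ⟨h, hlt, hz, -⟩
          rw [Bool.and_eq_true_iff]
          constructor
          · have := hz (by trivial)
            simpa using this
          · exact decide_eq_true (by simpa using hlt)
        · intro hb
          obtain ⟨h1, h2⟩ := Bool.and_eq_true_iff.mp hb
          refine ⟨?_, ?_, ?_, ?_⟩
          · simp
          · simpa using of_decide_eq_true h2
          · intro _
            simpa using h1
          · intro h0
            exact absurd (by trivial) h0
    have hlen : (if (pbig p c && nsmall c t) = true then [c] else ([]:List α)).length =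
        if (pbig p c && nsmall c t) = true then 1 else 0 := by
      split <;> simp
    calc (ddL p (c :: t)).length
        = (if (pbig p c && nsmall c t) = true then [c] else ([]:List α)).length +
          (ddL (some c) t).length := by rw [ddL_cons, List.length_append]
      _ = _ := by
          rw [hlen, ih (some c) t.length rfl,
            Finset.sum_congr rfl (fun i _ => hshift i), hzero]
          omega

/-! ### powerset sum -/

lemma sum_powerset_pow {β : Type*} [DecidableEq β] (T : Finset β) :
    ∑ S ∈ T.powerset, (Polynomial.X : Polynomial ℤ) ^ S.card = (1 + Polynomial.X) ^ T.card := by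
  classical
  induction T using Finset.induction_on with
  | empty => simp
  | @insert a T ha ih =>
    rw [Finset.sum_powerset_insert ha, Finset.card_insert_of_notMem ha, pow_succ, ← ih]
    have : ∀ S ∈ T.powerset, (Polynomial.X : Polynomial ℤ) ^ (insert a S).card =
        Polynomial.X ^ S.card * Polynomial.X := by
      intro S hS
      have haS : a ∉ S := fun h => ha (Finset.mem_powerset.mp hS h)
      rw [Finset.card_insert_of_notMem haS, pow_succ]
    rw [Finset.sum_congr rfl this, ← Finset.sum_mul]
    ring

end Gamma



namespace Gamma

variable {n : ℕ}

/-- The set of words coming from permutations. -/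
def WF (n : ℕ) : Finset (List (Fin n)) :=
  Finset.univ.image (fun π : Equiv.Perm (Fin n) => List.ofFn ⇑π)

lemma ofFn_perm_injective :
    Function.Injective (fun π : Equiv.Perm (Fin n) => List.ofFn ⇑π) := by
  intro a b h
  simp only [List.ofFn_inj] at h
  exact Equiv.coe_fn_injective h

lemma mem_WF {w : List (Fin n)} : w ∈ WF n ↔ w.Nodup ∧ w.length = n := by
  constructor
  · intro hw
    obtain ⟨π, -, rfl⟩ := Finset.mem_image.mp hw
    exact ⟨List.nodup_ofFn.mpr π.injective, List.length_ofFn⟩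
  · rintro ⟨hnd, hlen⟩
    have hinj : Function.Injective (fun i : Fin n => w.get (Fin.cast hlen.symm i)) := by
      intro i j hij
      have h2 := List.nodup_iff_injective_get.mp hnd hij
      have : (Fin.cast hlen.symm i).1 = (Fin.cast hlen.symm j).1 := by rw [h2]
      exact Fin.ext (by simpa using this)
    have hbij := Finite.injective_iff_bijective.mp hinj
    refine Finset.mem_image.mpr ⟨Equiv.ofBijective _ hbij, Finset.mem_univ _, ?_⟩
    show List.ofFn (fun i : Fin n => w.get (Fin.cast hlen.symm i)) = w
    apply List.ext_getElem
    · rw [List.length_ofFn, hlen]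
    · intro i h1 h2
      rw [List.getElem_ofFn]
      simp [List.get_eq_getElem]

lemma desNum_eq (π : Equiv.Perm (Fin n)) : desNum π = desL (List.ofFn ⇑π) := by
  classical
  have key := Fin.sum_univ_eq_sum_range (fun j : ℕ => if (∃ h : j + 1 < n,
    (List.ofFn ⇑π)[j+1]'(Nat.lt_of_lt_of_eq h (List.length_ofFn (f := ⇑π)).symm) <
    (List.ofFn ⇑π)[j]'(Nat.lt_of_succ_lt (Nat.lt_of_lt_of_eq h (List.length_ofFn (f := ⇑π)).symm)))
    then (1:ℕ) else 0) n
  rw [desNum, Finset.card_filter, desL_eq_sum (List.ofFn ⇑π) n (List.length_ofFn (f := ⇑π)), ← key]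
  apply Finset.sum_congr rfl
  intro i _
  beta_reduce
  apply if_congr _ rfl rfl
  constructor
  · rintro ⟨h, hlt⟩
    refine ⟨h, ?_⟩
    rw [List.getElem_ofFn, List.getElem_ofFn]
    simpa using hlt
  · rintro ⟨h, hlt⟩
    refine ⟨h, ?_⟩
    rw [List.getElem_ofFn, List.getElem_ofFn] at hlt
    simpa using hlt

lemma ddNum_eq (π : Equiv.Perm (Fin n)) : ddNum π = (ddL none (List.ofFn ⇑π)).length := by
  classical
  have key := Fin.sum_univ_eq_sum_range (fun j : ℕ => if (∃ h : j + 1 < n,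
        (List.ofFn ⇑π)[j+1]'(Nat.lt_of_lt_of_eq h (List.length_ofFn (f := ⇑π)).symm) <
          (List.ofFn ⇑π)[j]'(Nat.lt_of_succ_lt (Nat.lt_of_lt_of_eq h (List.length_ofFn (f := ⇑π)).symm)) ∧
        (j = 0 → pbig none ((List.ofFn ⇑π)[0]'(Nat.lt_of_le_of_lt (Nat.zero_le j)
          (Nat.lt_of_succ_lt (Nat.lt_of_lt_of_eq h (List.length_ofFn (f := ⇑π)).symm)))) = true) ∧
        (j ≠ 0 → (List.ofFn ⇑π)[j]'(Nat.lt_of_succ_lt (Nat.lt_of_lt_of_eq h (List.length_ofFn (f := ⇑π)).symm)) <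
          (List.ofFn ⇑π)[j-1]'(Nat.lt_of_le_of_lt (Nat.sub_le j 1)
            (Nat.lt_of_succ_lt (Nat.lt_of_lt_of_eq h (List.length_ofFn (f := ⇑π)).symm)))))
        then (1:ℕ) else 0) n
  rw [ddNum, Finset.card_filter,
    ddL_length_eq_sum (List.ofFn ⇑π) none n (List.length_ofFn (f := ⇑π)), ← key]
  apply Finset.sum_congr rfl
  intro i _
  beta_reduce
  apply if_congr _ rfl rfl
  constructor
  · rintro ⟨hor, h, hlt⟩
    refine ⟨h, ?_, fun _ => rfl, ?_⟩
    · rw [List.getElem_ofFn, List.getElem_ofFn]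
      simpa using hlt
    · intro hne
      rcases hor with h0 | ⟨h1, hprev⟩
      · exact absurd h0 hne
      · rw [List.getElem_ofFn, List.getElem_ofFn]
        simpa using hprev
  · rintro ⟨h, hlt, -, hprev⟩
    constructor
    · by_cases hi : i.1 = 0
      · exact Or.inl hi
      · refine Or.inr ⟨by omega, ?_⟩
        have h3 := hprev hi
        rw [List.getElem_ofFn, List.getElem_ofFn] at h3
        simpa using h3
    · refine ⟨h, ?_⟩
      rw [List.getElem_ofFn, List.getElem_ofFn] at hlt
      simpa using hlt

end Gamma

open Gamma

/-- Foata–Schützenberger: the Eulerian polynomial has the gamma-expansion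
`A_n(t) = ∑_{k=0}^{⌊(n-1)/2⌋} γ_{n,k} t^k (1+t)^{n-1-2k}` where `γ_{n,k}` counts
permutations with no double descents and `k` descents. -/
theorem eulerian_gamma_expansion (n : ℕ) (hn : 1 ≤ n) :
    (∑ π : Equiv.Perm (Fin n), (X : Polynomial ℤ) ^ desNum π) =
      ∑ k ∈ Finset.range ((n - 1) / 2 + 1),
        C ((Finset.univ.filter (fun π : Equiv.Perm (Fin n) =>
              ddNum π = 0 ∧ desNum π = k)).card : ℤ) *
          X ^ k * (1 + X) ^ (n - 1 - 2 * k) := by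
  classical
  -- Facts about no-double-descent words
  have hWn : ∀ w ∈ (WF n).filter (fun w => ddL none w = []),
      2 * desL w + 1 + (daF w).card = n ∧ desL w ∈ Finset.range ((n-1)/2 + 1) := by
    intro w hw
    obtain ⟨hwW, hdd⟩ := Finset.mem_filter.mp hw
    obtain ⟨hnd, hlen⟩ := mem_WF.mp hwW
    have hne : w ≠ [] := by
      intro h
      rw [h] at hlen
      simp at hlen
      omega
    have hda := da_card_of_no_dd w hne hdd
    have hcard : (daF w).card = (daL none w).length := daF_card hnd
    rw [hlen] at hda
    refine ⟨by omega, ?_⟩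
    rw [Finset.mem_range]
    omega
  -- LHS
  have hL1 : (∑ π : Equiv.Perm (Fin n), (X : Polynomial ℤ) ^ desNum π)
      = ∑ w ∈ WF n, (X : Polynomial ℤ) ^ desL w := by
    rw [show (WF n) = Finset.univ.image (fun π : Equiv.Perm (Fin n) => List.ofFn ⇑π) from rfl,
      Finset.sum_image (fun x _ y _ h => ofFn_perm_injective h)]
    exact Finset.sum_congr rfl (fun π _ => by rw [desNum_eq])
  -- coefficient rewrite
  have hC : ∀ k, (Finset.univ.filter (fun π : Equiv.Perm (Fin n) =>
        ddNum π = 0 ∧ desNum π = k)).card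
      = ((WF n).filter (fun w => ddL none w = [] ∧ desL w = k)).card := by
    intro k
    have h1 : Finset.univ.filter (fun π : Equiv.Perm (Fin n) => ddNum π = 0 ∧ desNum π = k)
        = Finset.univ.filter
            (fun π : Equiv.Perm (Fin n) => ddL none (List.ofFn ⇑π) = [] ∧ desL (List.ofFn ⇑π) = k) := by
      apply Finset.filter_congr
      intro π _
      rw [ddNum_eq, desNum_eq, List.length_eq_zero_iff]
    rw [h1,
      show ((WF n).filter (fun w => ddL none w = [] ∧ desL w = k))
        = Finset.image (fun π : Equiv.Perm (Fin n) => List.ofFn ⇑π)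
            (Finset.univ.filter
              (fun π : Equiv.Perm (Fin n) => ddL none (List.ofFn ⇑π) = [] ∧ desL (List.ofFn ⇑π) = k))
        from Finset.filter_image,
      Finset.card_image_of_injective _ ofFn_perm_injective]
  -- fiber sums
  have h2 : ∀ k, C (((Finset.univ.filter (fun π : Equiv.Perm (Fin n) =>
          ddNum π = 0 ∧ desNum π = k)).card : ℤ)) * X ^ k * (1 + X) ^ (n - 1 - 2 * k)
      = ∑ w ∈ ((WF n).filter (fun w => ddL none w = [])).filter (fun w => desL w = k),
          (X : Polynomial ℤ) ^ desL w * (1 + X) ^ (n - 1 - 2 * desL w) := by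
    intro k
    rw [Finset.filter_filter]
    rw [Finset.sum_congr rfl (fun w hw => by
      have hk : desL w = k := (Finset.mem_filter.mp hw).2.2
      rw [hk])]
    rw [Finset.sum_const, hC k, nsmul_eq_mul, ← map_natCast (Polynomial.C : ℤ →+* Polynomial ℤ),
      mul_assoc]
  -- fiberwise to total
  have h3 : ∑ k ∈ Finset.range ((n - 1) / 2 + 1),
        ∑ w ∈ ((WF n).filter (fun w => ddL none w = [])).filter (fun w => desL w = k),
          (X : Polynomial ℤ) ^ desL w * (1 + X) ^ (n - 1 - 2 * desL w)
      = ∑ w ∈ (WF n).filter (fun w => ddL none w = []),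
          (X : Polynomial ℤ) ^ desL w * (1 + X) ^ (n - 1 - 2 * desL w) :=
    Finset.sum_fiberwise_of_maps_to (fun w hw => (hWn w hw).2) _
  -- expand the binomial as a powerset sum
  have h4 : ∀ w ∈ (WF n).filter (fun w => ddL none w = []),
      (X : Polynomial ℤ) ^ desL w * (1 + X) ^ (n - 1 - 2 * desL w)
        = ∑ S ∈ (daF w).powerset, (X : Polynomial ℤ) ^ (desL w + S.card) := by
    intro w hw
    have hcard : n - 1 - 2 * desL w = (daF w).card := by
      have := (hWn w hw).1
      omega
    rw [hcard, ← sum_powerset_pow (daF w), Finset.mul_sum]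
    exact Finset.sum_congr rfl (fun S _ => by rw [pow_add])
  -- the bijection
  have h5 : ∑ w ∈ (WF n).filter (fun w => ddL none w = []),
        ∑ S ∈ (daF w).powerset, (X : Polynomial ℤ) ^ (desL w + S.card)
      = ∑ w ∈ WF n, (X : Polynomial ℤ) ^ desL w := by
    rw [← Finset.sum_sigma ((WF n).filter (fun w => ddL none w = []))
      (fun w => (daF w).powerset)
      (fun p => (X : Polynomial ℤ) ^ (desL p.1 + p.2.card))]
    apply Finset.sum_nbij' (i := fun p => phi p.1 p.2) (j := fun w => ⟨nf w, ddF w⟩)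
    · -- i maps into WF n
      rintro ⟨σ, S⟩ hp
      obtain ⟨hσ, hS⟩ := Finset.mem_sigma.mp hp
      obtain ⟨hσW, hσdd⟩ := Finset.mem_filter.mp hσ
      obtain ⟨hnd, hlen⟩ := mem_WF.mp hσW
      obtain ⟨p1, p2, p3, p4, p5, p6⟩ :=
        phi_spec S.card σ S hnd hσdd (Finset.mem_powerset.mp hS) le_rfl
      exact mem_WF.mpr ⟨p1, by rw [p2.length_eq, hlen]⟩
    · -- j maps into the sigma set
      intro w hw
      obtain ⟨hnd, hlen⟩ := mem_WF.mp hw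
      obtain ⟨q1, q2, q3, q4, q5, q6⟩ := nf_spec hnd
      refine Finset.mem_sigma.mpr ⟨Finset.mem_filter.mpr ⟨?_, q3⟩, ?_⟩
      · exact mem_WF.mpr ⟨q1, by rw [q2.length_eq, hlen]⟩
      · rw [Finset.mem_powerset]
        exact ddF_subset_daF_nf hnd
    · -- j (i p) = p
      rintro ⟨σ, S⟩ hp
      obtain ⟨hσ, hS⟩ := Finset.mem_sigma.mp hp
      obtain ⟨hσW, hσdd⟩ := Finset.mem_filter.mp hσ
      obtain ⟨hnd, hlen⟩ := mem_WF.mp hσW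
      obtain ⟨p1, p2, p3, p4, p5, p6⟩ :=
        phi_spec S.card σ S hnd hσdd (Finset.mem_powerset.mp hS) le_rfl
      exact Sigma.ext p6 (heq_of_eq p3)
    · -- i (j w) = w
      intro w hw
      obtain ⟨hnd, hlen⟩ := mem_WF.mp hw
      exact phi_nf (ddL none w).length w le_rfl hnd
    · -- values agree
      rintro ⟨σ, S⟩ hp
      obtain ⟨hσ, hS⟩ := Finset.mem_sigma.mp hp
      obtain ⟨hσW, hσdd⟩ := Finset.mem_filter.mp hσ
      obtain ⟨hnd, hlen⟩ := mem_WF.mp hσW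
      obtain ⟨p1, p2, p3, p4, p5, p6⟩ :=
        phi_spec S.card σ S hnd hσdd (Finset.mem_powerset.mp hS) le_rfl
      rw [p5]
  rw [hL1, ← h5, ← Finset.sum_congr rfl h4, ← h3]
  exact Finset.sum_congr rfl (fun k _ => (h2 k).symm)
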